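/- arXiv:1211.3151 — 2 statements merged into one kernel-verified Lean document; each statement's English description precedes it below -/
import Mathlib

section
/- With the grading of the previous statement: let Z_1 ∈ g_{μ_1}, Z_2 ∈ g_{μ_2}, and λ ∈ Λ⁺ with ht(λ) ≤ ht(μ_1) + ht(μ_2), where ht is the additive height function on roots. Then the g_λ-component of e^{ad(−Z_2)}e^{ad(−Z_1)}e^{ad Z_2}e^{ad Z_1}(Y) equals Y_λ; i.e., conjugating by the commutator [exp Z_1, exp Z_2] leaves all entries of height ≤ ht(μ_1)+ht(μ_2) unchanged. -/
open Finset

private lemma exp_neg_exp (L : Type*) [LieRing L] [LieAlgebra ℝ L] (Z : L) (m : ℕ)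
    (hnil : ∀ w : L, (fun w => ⁅Z, w⁆)^[m] w = 0) (x : L) :
    ∑ R ∈ Finset.range m, ((R.factorial : ℝ))⁻¹ • (fun w => ⁅-Z, w⁆)^[R]
      (∑ r ∈ Finset.range m, ((r.factorial : ℝ))⁻¹ • (fun w => ⁅Z, w⁆)^[r] x) = x := by
  classical
  rcases Nat.eq_zero_or_pos m with rfl | hm
  · simpa using (hnil x).symm
  set f := LieAlgebra.ad ℝ L Z with hf
  have hcoe : (fun w : L => ⁅Z, w⁆) = ⇑f := by funext w; simp [hf]
  have hit : ∀ (r : ℕ) (w : L), (fun w : L => ⁅Z, w⁆)^[r] w = (f ^ r) w := by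
    intro r w; rw [hcoe, Module.End.pow_apply]
  have hcoeN : (fun w : L => ⁅-Z, w⁆) = ⇑((-1 : ℝ) • f) := by
    funext w; simp [hf]
  have hitN : ∀ (r : ℕ) (w : L), (fun w : L => ⁅-Z, w⁆)^[r] w = ((-1 : ℝ) ^ r) • (f ^ r) w := by
    intro r w
    rw [hcoeN, ← Module.End.pow_apply, smul_pow, LinearMap.smul_apply]
  have hzero : ∀ k, m ≤ k → (f ^ k) x = 0 := by
    intro k hk
    have h1 : (f ^ m) x = 0 := by rw [Module.End.pow_apply, ← hcoe]; exact hnil x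
    have h2 : f ^ k = f ^ (k - m) * f ^ m := by rw [← pow_add, Nat.sub_add_cancel hk]
    rw [h2, Module.End.mul_apply, h1, map_zero]
  have step1 : ∑ R ∈ Finset.range m, ((R.factorial : ℝ))⁻¹ • (fun w : L => ⁅-Z, w⁆)^[R]
      (∑ r ∈ Finset.range m, ((r.factorial : ℝ))⁻¹ • (fun w : L => ⁅Z, w⁆)^[r] x)
      = ∑ p ∈ Finset.range m ×ˢ Finset.range m,
          ((-1 : ℝ) ^ p.1 * ((p.1.factorial : ℝ)⁻¹ * (p.2.factorial : ℝ)⁻¹)) • (f ^ (p.1 + p.2)) x := by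
    rw [Finset.sum_product]
    refine Finset.sum_congr rfl fun R _ => ?_
    simp only [hit, hitN, map_sum, map_smul, Finset.smul_sum, smul_smul]
    refine Finset.sum_congr rfl fun r _ => ?_
    rw [pow_add, Module.End.mul_apply]
    ring_nf
  rw [step1]
  have hsub : (Finset.range m).biUnion (fun k => Finset.HasAntidiagonal.antidiagonal k)
      ⊆ Finset.range m ×ˢ Finset.range m := by
    intro p hp
    obtain ⟨k, hk, hpk⟩ := Finset.mem_biUnion.1 hp
    rw [Finset.HasAntidiagonal.mem_antidiagonal] at hpk
    rw [Finset.mem_range] at hk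
    simp only [Finset.mem_product, Finset.mem_range]
    omega
  rw [← Finset.sum_subset hsub (by
    intro p hp hnp
    have : m ≤ p.1 + p.2 := by
      by_contra hlt
      exact hnp (Finset.mem_biUnion.2 ⟨p.1 + p.2, Finset.mem_range.2 (by omega),
        Finset.HasAntidiagonal.mem_antidiagonal.2 rfl⟩)
    rw [hzero _ this, smul_zero])]
  rw [Finset.sum_biUnion (by
    intro k₁ _ k₂ _ hne
    simp only [Finset.disjoint_left]
    intro p hp1 hp2
    rw [Finset.HasAntidiagonal.mem_antidiagonal] at hp1 hp2
    exact hne (by omega))]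
  have inner : ∀ k, ∑ p ∈ Finset.HasAntidiagonal.antidiagonal k,
      ((-1 : ℝ) ^ p.1 * ((p.1.factorial : ℝ)⁻¹ * (p.2.factorial : ℝ)⁻¹)) • (f ^ (p.1 + p.2)) x
      = (if k = 0 then (1:ℝ) else 0) • (f ^ k) x := by
    intro k
    have h1 : ∑ p ∈ Finset.HasAntidiagonal.antidiagonal k,
        ((-1 : ℝ) ^ p.1 * ((p.1.factorial : ℝ)⁻¹ * (p.2.factorial : ℝ)⁻¹)) • (f ^ (p.1 + p.2)) x
        = (∑ p ∈ Finset.HasAntidiagonal.antidiagonal k,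
            ((-1 : ℝ) ^ p.1 * ((p.1.factorial : ℝ)⁻¹ * (p.2.factorial : ℝ)⁻¹))) • (f ^ k) x := by
      rw [Finset.sum_smul]
      refine Finset.sum_congr rfl fun p hp => ?_
      rw [Finset.HasAntidiagonal.mem_antidiagonal] at hp
      rw [hp]
    rw [h1]
    congr 1
    rw [Finset.Nat.sum_antidiagonal_eq_sum_range_succ_mk]
    have hterm : ∀ i ∈ Finset.range (k + 1),
        (-1 : ℝ) ^ i * ((i.factorial : ℝ)⁻¹ * ((k - i).factorial : ℝ)⁻¹)
        = (k.factorial : ℝ)⁻¹ * ((-1 : ℝ) ^ i * (k.choose i : ℝ)) := by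
      intro i hi
      rw [Finset.mem_range] at hi
      have hik : i ≤ k := by omega
      have key : (k.factorial : ℝ) = (k.choose i : ℝ) * (i.factorial : ℝ) * ((k - i).factorial : ℝ) := by
        exact_mod_cast (Nat.choose_mul_factorial_mul_factorial hik).symm
      have hi0 : (i.factorial : ℝ) ≠ 0 := Nat.cast_ne_zero.2 i.factorial_ne_zero
      have hk0 : ((k - i).factorial : ℝ) ≠ 0 := Nat.cast_ne_zero.2 (k - i).factorial_ne_zero
      have hc0 : (k.choose i : ℝ) ≠ 0 := Nat.cast_ne_zero.2 (Nat.choose_pos hik).ne'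
      rw [key]
      field_simp
    rw [Finset.sum_congr rfl hterm, ← Finset.mul_sum]
    have hcast : (∑ i ∈ Finset.range (k + 1), (-1 : ℝ) ^ i * (k.choose i : ℝ))
        = ((∑ i ∈ Finset.range (k + 1), (-1 : ℤ) ^ i * (k.choose i : ℤ) : ℤ) : ℝ) := by
      push_cast
      exact Finset.sum_congr rfl fun i _ => by ring
    rw [hcast, Int.alternating_sum_range_choose]
    by_cases hk0 : k = 0
    · simp [hk0, Nat.factorial]
    · simp [hk0]
  rw [Finset.sum_congr rfl (fun k _ => inner k)]
  simp only [ite_smul, one_smul, zero_smul]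
  rw [Finset.sum_ite_eq' (Finset.range m) 0 (fun k => (f ^ k) x)]
  simp [Finset.mem_range.2 hm]

/-- In a nilpotent Lie algebra graded by positive roots with an additive height
function, conjugating `Y = ∑ Y_λ` by the commutator `[exp Z₁, exp Z₂]` (that is,
applying `e^{ad(−Z₂)}e^{ad(−Z₁)}e^{ad Z₂}e^{ad Z₁}`) leaves all components of height
at most `ht μ₁ + ht μ₂` unchanged. -/
theorem stmt_11 (V : Type*) [AddCommMonoid V]
    (L : Type*) [LieRing L] [LieAlgebra ℝ L]
    (Λp : Finset V) (g : V → Submodule ℝ L)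
    (hbr : ∀ a b : V, a ∈ Λp → b ∈ Λp → ∀ x ∈ g a, ∀ y ∈ g b,
      (a + b ∈ Λp → ⁅x, y⁆ ∈ g (a + b)) ∧ (a + b ∉ Λp → ⁅x, y⁆ = (0 : L)))
    (ht : V → ℕ) (htadd : ∀ a b : V, ht (a + b) = ht a + ht b)
    (htpos : ∀ l ∈ Λp, 1 ≤ ht l)
    (Yc : V → L) (hYc : ∀ l ∈ Λp, Yc l ∈ g l)
    (μ₁ μ₂ : V) (hμ₁ : μ₁ ∈ Λp) (hμ₂ : μ₂ ∈ Λp)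
    (Z₁ Z₂ : L) (hZ₁ : Z₁ ∈ g μ₁) (hZ₂ : Z₂ ∈ g μ₂)
    (m : ℕ)
    (hnil₁ : ∀ w : L, (fun w => ⁅Z₁, w⁆)^[m] w = 0)
    (hnil₂ : ∀ w : L, (fun w => ⁅Z₂, w⁆)^[m] w = 0) :
    let E : L → L → L := fun A W =>
      ∑ r ∈ Finset.range m, ((r.factorial : ℝ))⁻¹ • (fun w => ⁅A, w⁆)^[r] W
    let Y : L := ∑ l ∈ Λp, Yc l
    let W : L := E (-Z₂) (E (-Z₁) (E Z₂ (E Z₁ Y)))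
    ∃ C : V → L, (∀ l ∈ Λp, C l ∈ g l) ∧ W = ∑ l ∈ Λp, C l ∧
      ∀ l ∈ Λp, ht l ≤ ht μ₁ + ht μ₂ → C l = Yc l := by
  classical
  intro E Y W
  have hEdef : E = fun A W =>
      ∑ r ∈ Finset.range m, ((r.factorial : ℝ))⁻¹ • (fun w => ⁅A, w⁆)^[r] W := rfl
  have hYdef : Y = ∑ l ∈ Λp, Yc l := rfl
  have hWdef : W = E (-Z₂) (E (-Z₁) (E Z₂ (E Z₁ Y))) := rfl
  set ad : L → Module.End ℝ L := fun A => LieAlgebra.ad ℝ L A with had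
  have hit : ∀ (A : L) (r : ℕ) (w : L), (fun w : L => ⁅A, w⁆)^[r] w = (ad A ^ r) w := by
    intro A r w
    have : (fun w : L => ⁅A, w⁆) = ⇑(ad A) := by funext w; simp [had]
    rw [this, Module.End.pow_apply]
  set Elin : L → Module.End ℝ L :=
    fun A => ∑ r ∈ Finset.range m, ((r.factorial : ℝ))⁻¹ • (ad A) ^ r with hElin
  have hEL : ∀ (A : L) (x : L), E A x = Elin A x := by
    intro A x
    rw [hEdef, hElin]
    simp only [LinearMap.sum_apply, LinearMap.smul_apply, hit]
  -- filtration by height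
  set s : ℕ → Finset V := fun h => Λp.filter (fun l => h ≤ ht l) with hs
  set T : ℕ → Submodule ℝ L := fun h => ⨆ l ∈ s h, g l with hT
  have hgT : ∀ {l : V} {h : ℕ}, l ∈ Λp → h ≤ ht l → g l ≤ T h := by
    intro l h hl hh
    exact le_iSup₂ (f := fun l (_ : l ∈ s h) => g l) l (Finset.mem_filter.2 ⟨hl, hh⟩)
  have hTmono : ∀ {h h' : ℕ}, h ≤ h' → T h' ≤ T h := by
    intro h h' hh
    refine iSup₂_le fun l hl => ?_
    obtain ⟨hlΛ, hl'⟩ := Finset.mem_filter.1 hl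
    exact hgT hlΛ (le_trans hh hl')
  have hbrT : ∀ (ν : V), ν ∈ Λp → ∀ Z ∈ g ν, ∀ (h : ℕ) (x : L), x ∈ T h →
      ⁅Z, x⁆ ∈ T (ht ν + h) := by
    intro ν hν Z hZ h x hx
    rw [hT] at hx
    rw [Submodule.mem_iSup_finset_iff_exists_sum] at hx
    obtain ⟨c, hc⟩ := hx
    have hxe : ⁅Z, x⁆ = ∑ l ∈ s h, ⁅Z, (c l : L)⁆ := by
      rw [← hc]
      exact map_sum (LieAlgebra.ad ℝ L Z) _ _
    rw [hxe]
    refine Submodule.sum_mem _ fun l hl => ?_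
    obtain ⟨hlΛ, hlh⟩ := Finset.mem_filter.1 hl
    by_cases hmem : ν + l ∈ Λp
    · refine hgT hmem ?_ ((hbr ν l hν hlΛ Z hZ (c l) (c l).2).1 hmem)
      rw [htadd]; omega
    · rw [(hbr ν l hν hlΛ Z hZ (c l) (c l).2).2 hmem]
      exact zero_mem _
  have hiterT : ∀ (ν : V), ν ∈ Λp → ∀ Z ∈ g ν, ∀ (r h : ℕ) (x : L), x ∈ T h →
      ((ad Z) ^ r) x ∈ T (r * ht ν + h) := by
    intro ν hν Z hZ r
    induction r with
    | zero => intro h x hx; simpa using hx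
    | succ n ih =>
      intro h x hx
      have h1 : ((ad Z) ^ (n + 1)) x = ((ad Z) ^ n) (⁅Z, x⁆) := by
        rw [pow_succ, Module.End.mul_apply]; rfl
      rw [h1]
      have h2 := ih (ht ν + h) _ (hbrT ν hν Z hZ h x hx)
      have h3 : n * ht ν + (ht ν + h) = (n + 1) * ht ν + h := by ring
      rwa [h3] at h2
  have hElinT : ∀ (ν : V), ν ∈ Λp → ∀ Z ∈ g ν, ∀ (h : ℕ) (x : L), x ∈ T h →
      Elin Z x ∈ T h := by
    intro ν hν Z hZ h x hx
    rw [hElin]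
    simp only [LinearMap.sum_apply, LinearMap.smul_apply]
    refine Submodule.sum_mem _ fun r _ => Submodule.smul_mem _ _ ?_
    exact hTmono (Nat.le_add_left h _) (hiterT ν hν Z hZ r h x hx)
  have hYT : Y ∈ T 1 := by
    rw [hYdef]
    exact Submodule.sum_mem _ fun l hl => hgT hl (htpos l hl) (hYc l hl)
  -- the commutator defect
  have expand : ∀ (A B : L), Elin A (Elin B Y)
      = ∑ a ∈ Finset.range m, ∑ b ∈ Finset.range m,
          ((a.factorial : ℝ)⁻¹ * (b.factorial : ℝ)⁻¹) • ((ad A) ^ a) (((ad B) ^ b) Y) := by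
    intro A B
    rw [hElin]
    simp only [LinearMap.sum_apply, LinearMap.smul_apply, map_sum, map_smul,
      Finset.smul_sum, smul_smul]
    rw [Finset.sum_comm]
    exact Finset.sum_congr rfl fun a _ => Finset.sum_congr rfl fun b _ => by rw [mul_comm]
  have hΔmem : Elin Z₂ (Elin Z₁ Y) - Elin Z₁ (Elin Z₂ Y) ∈ T (1 + (ht μ₁ + ht μ₂)) := by
    have e2 : Elin Z₁ (Elin Z₂ Y) = ∑ a ∈ Finset.range m, ∑ b ∈ Finset.range m,
        ((b.factorial : ℝ)⁻¹ * (a.factorial : ℝ)⁻¹) • ((ad Z₁) ^ b) (((ad Z₂) ^ a) Y) := by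
      rw [expand Z₁ Z₂]; exact Finset.sum_comm
    rw [expand Z₂ Z₁, e2, ← Finset.sum_sub_distrib]
    refine Submodule.sum_mem _ fun a _ => ?_
    rw [← Finset.sum_sub_distrib]
    refine Submodule.sum_mem _ fun b _ => ?_
    rcases Nat.eq_zero_or_pos a with rfl | hapos
    · simp [Nat.factorial_zero, mul_comm]
    rcases Nat.eq_zero_or_pos b with rfl | hbpos
    · simp [Nat.factorial_zero, mul_comm]
    have m1 : ((ad Z₂) ^ a) (((ad Z₁) ^ b) Y) ∈ T (1 + (ht μ₁ + ht μ₂)) := by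
      have h1 := hiterT μ₂ hμ₂ Z₂ hZ₂ a _ _ (hiterT μ₁ hμ₁ Z₁ hZ₁ b 1 Y hYT)
      refine hTmono ?_ h1
      have hb1 : ht μ₁ ≤ b * ht μ₁ := Nat.le_mul_of_pos_left _ hbpos
      have ha1 : ht μ₂ ≤ a * ht μ₂ := Nat.le_mul_of_pos_left _ hapos
      omega
    have m2 : ((ad Z₁) ^ b) (((ad Z₂) ^ a) Y) ∈ T (1 + (ht μ₁ + ht μ₂)) := by
      have h1 := hiterT μ₁ hμ₁ Z₁ hZ₁ b _ _ (hiterT μ₂ hμ₂ Z₂ hZ₂ a 1 Y hYT)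
      refine hTmono ?_ h1
      have hb1 : ht μ₁ ≤ b * ht μ₁ := Nat.le_mul_of_pos_left _ hbpos
      have ha1 : ht μ₂ ≤ a * ht μ₂ := Nat.le_mul_of_pos_left _ hapos
      omega
    exact sub_mem (Submodule.smul_mem _ _ m1) (Submodule.smul_mem _ _ m2)
  -- inverses
  have hinv₁ : ∀ x : L, Elin (-Z₁) (Elin Z₁ x) = x := by
    intro x
    have h1 : ∀ (A : L) (y : L), Elin A y
        = ∑ r ∈ Finset.range m, ((r.factorial : ℝ))⁻¹ • (fun w => ⁅A, w⁆)^[r] y := by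
      intro A y; rw [← hEL, hEdef]
    rw [h1, h1]
    exact exp_neg_exp L Z₁ m hnil₁ x
  have hinv₂ : ∀ x : L, Elin (-Z₂) (Elin Z₂ x) = x := by
    intro x
    have h1 : ∀ (A : L) (y : L), Elin A y
        = ∑ r ∈ Finset.range m, ((r.factorial : ℝ))⁻¹ • (fun w => ⁅A, w⁆)^[r] y := by
      intro A y; rw [← hEL, hEdef]
    rw [h1, h1]
    exact exp_neg_exp L Z₂ m hnil₂ x
  set Δ : L := Elin Z₂ (Elin Z₁ Y) - Elin Z₁ (Elin Z₂ Y) with hΔ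
  have hWval : W = Y + Elin (-Z₂) (Elin (-Z₁) Δ) := by
    have hW1 : W = Elin (-Z₂) (Elin (-Z₁) (Elin Z₂ (Elin Z₁ Y))) := by
      rw [hWdef, hEL, hEL, hEL, hEL]
    have hsplit : Elin Z₂ (Elin Z₁ Y) = Elin Z₁ (Elin Z₂ Y) + Δ := by
      rw [hΔ]; abel
    rw [hW1, hsplit, map_add, map_add, hinv₁, hinv₂]
  have hΔ₃ : Elin (-Z₂) (Elin (-Z₁) Δ) ∈ T (1 + (ht μ₁ + ht μ₂)) :=
    hElinT μ₂ hμ₂ (-Z₂) (neg_mem hZ₂) _ _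
      (hElinT μ₁ hμ₁ (-Z₁) (neg_mem hZ₁) _ _ hΔmem)
  rw [hT, Submodule.mem_iSup_finset_iff_exists_sum] at hΔ₃
  obtain ⟨c, hc⟩ := hΔ₃
  refine ⟨fun l => Yc l + (if 1 + (ht μ₁ + ht μ₂) ≤ ht l then (c l : L) else 0), ?_, ?_, ?_⟩
  · intro l hl
    refine add_mem (hYc l hl) ?_
    split
    · exact (c l).2
    · exact zero_mem _
  · rw [Finset.sum_add_distrib, ← Finset.sum_filter, ← hYdef]
    rw [hWval]
    congr 1
    rw [← hc]
  · intro l hl hle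
    show Yc l + (if 1 + (ht μ₁ + ht μ₂) ≤ ht l then (c l : L) else 0) = Yc l
    rw [if_neg (by omega), add_zero]
end

section
/- Furthermore, in the situation above, if additionally all non-simple components Y_{λ'} with λ' < λ_0 are zero and {μ_1} + {μ_2} + Π = {λ_0} (meaning μ_1 + μ_2 + α is a root only for one simple root α = λ_i, giving λ_0), then the g_{λ_0}-component of e^{ad(−Z_2)}e^{ad(−Z_1)}e^{ad Z_2}e^{ad Z_1}(Y) equals [[Z_2, Z_1], Y_{λ_i}] + Y_{λ_0}. -/
open Finset

lemma factinv_eq (n i : ℕ) (hi : i ≤ n) :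
    ((-1 : ℝ)) ^ i * ((i.factorial : ℝ))⁻¹ * (((n - i).factorial : ℝ))⁻¹
      = ((n.factorial : ℝ))⁻¹ * ((-1 : ℝ) ^ i * (n.choose i : ℝ)) := by
  have key : ((n.choose i : ℝ)) * (i.factorial : ℝ) * ((n - i).factorial : ℝ)
      = (n.factorial : ℝ) := by
    exact_mod_cast congrArg (Nat.cast : ℕ → ℝ) (Nat.choose_mul_factorial_mul_factorial hi)
  have h1 : (i.factorial : ℝ) ≠ 0 := Nat.cast_ne_zero.2 i.factorial_ne_zero
  have h2 : ((n - i).factorial : ℝ) ≠ 0 := Nat.cast_ne_zero.2 (n - i).factorial_ne_zero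
  have h3 : (n.factorial : ℝ) ≠ 0 := Nat.cast_ne_zero.2 n.factorial_ne_zero
  field_simp
  linear_combination key.symm

lemma truncExpAux {A : Type*} [Ring A] [Algebra ℝ A] (a : A) (m : ℕ) (hm : 0 < m)
    (hnil : a ^ m = 0) :
    (∑ r ∈ Finset.range m, ((r.factorial : ℝ))⁻¹ • (-a) ^ r) *
      (∑ r ∈ Finset.range m, ((r.factorial : ℝ))⁻¹ • a ^ r) = 1 := by
  have hneg : ∀ r : ℕ, (-a) ^ r = ((-1 : ℝ) ^ r) • a ^ r := by
    intro r
    rw [← neg_one_smul ℝ a, smul_pow]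
  have step1 :
      (∑ r ∈ Finset.range m, ((r.factorial : ℝ))⁻¹ • (-a) ^ r) *
        (∑ r ∈ Finset.range m, ((r.factorial : ℝ))⁻¹ • a ^ r)
      = ∑ p ∈ Finset.range m ×ˢ Finset.range m,
          (((-1 : ℝ)) ^ p.1 * ((p.1.factorial : ℝ))⁻¹ * ((p.2.factorial : ℝ))⁻¹) • a ^ (p.1 + p.2) := by
    rw [Finset.sum_mul_sum, Finset.sum_product]
    refine Finset.sum_congr rfl fun r _ => Finset.sum_congr rfl fun s _ => ?_
    simp only [hneg, smul_mul_assoc, mul_smul_comm, smul_smul, ← pow_add]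
    congr 1
    ring
  rw [step1]
  have maps : ∀ p ∈ Finset.range m ×ˢ Finset.range m, p.1 + p.2 ∈ Finset.range (2 * m) := by
    intro p hp
    simp only [Finset.mem_product, Finset.mem_range] at hp ⊢
    omega
  rw [← Finset.sum_fiberwise_of_maps_to maps]
  have inner : ∀ n ∈ Finset.range (2 * m),
      (∑ p ∈ (Finset.range m ×ˢ Finset.range m).filter (fun p => p.1 + p.2 = n),
        (((-1 : ℝ)) ^ p.1 * ((p.1.factorial : ℝ))⁻¹ * ((p.2.factorial : ℝ))⁻¹) • a ^ (p.1 + p.2))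
      = if n = 0 then 1 else 0 := by
    intro n _
    by_cases hn : n < m
    · have hfib : (Finset.range m ×ˢ Finset.range m).filter (fun p => p.1 + p.2 = n)
          = Finset.HasAntidiagonal.antidiagonal n := by
        ext p
        simp only [Finset.mem_filter, Finset.mem_product, Finset.mem_range,
          Finset.HasAntidiagonal.mem_antidiagonal]
        omega
      rw [hfib]
      have : ∀ p ∈ Finset.HasAntidiagonal.antidiagonal n,
          (((-1 : ℝ)) ^ p.1 * ((p.1.factorial : ℝ))⁻¹ * ((p.2.factorial : ℝ))⁻¹) • a ^ (p.1 + p.2)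
          = (((-1 : ℝ)) ^ p.1 * ((p.1.factorial : ℝ))⁻¹ * ((p.2.factorial : ℝ))⁻¹) • a ^ n := by
        intro p hp
        rw [Finset.HasAntidiagonal.mem_antidiagonal] at hp
        rw [hp]
      rw [Finset.sum_congr rfl this, ← Finset.sum_smul,
        Finset.Nat.sum_antidiagonal_eq_sum_range_succ_mk]
      have hcoef : (∑ i ∈ Finset.range (n + 1),
          (((-1 : ℝ)) ^ i * ((i.factorial : ℝ))⁻¹ * (((n - i).factorial : ℝ))⁻¹))
          = ((n.factorial : ℝ))⁻¹ * (∑ i ∈ Finset.range (n + 1), ((-1 : ℝ) ^ i * (n.choose i : ℝ))) := by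
        rw [Finset.mul_sum]
        refine Finset.sum_congr rfl fun i hi => ?_
        exact factinv_eq n i (by simpa using Nat.lt_succ_iff.mp (Finset.mem_range.mp hi))
      rw [hcoef]
      by_cases h0 : n = 0
      · subst h0; simp
      · have : (∑ i ∈ Finset.range (n + 1), ((-1 : ℝ) ^ i * (n.choose i : ℝ))) = 0 := by
          have := Int.alternating_sum_range_choose_of_ne h0
          exact_mod_cast congrArg (Int.cast : ℤ → ℝ) this
        rw [this, mul_zero, zero_smul, if_neg h0]
    · have h0 : n ≠ 0 := by omega
      rw [if_neg h0]
      refine Finset.sum_eq_zero fun p hp => ?_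
      rw [Finset.mem_filter] at hp
      have : a ^ (p.1 + p.2) = 0 := pow_eq_zero_of_le (by omega : m ≤ p.1 + p.2) hnil
      rw [this, smul_zero]
  rw [Finset.sum_congr rfl inner, Finset.sum_ite_eq' (Finset.range (2 * m)) 0 (fun _ => (1 : A))]
  rw [if_pos (Finset.mem_range.2 (by omega))]

lemma arithAux (r4 r1 a b h1 h2 hl : ℕ) (hh1 : 1 ≤ h1) (hh2 : 1 ≤ h2) (hhl : 1 ≤ hl)
    (heq : r4 * h2 + ((1 + a) * h1 + ((1 + b) * h2 + (r1 * h1 + hl))) = h1 + h2 + 1) :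
    r4 = 0 ∧ a = 0 ∧ b = 0 ∧ r1 = 0 ∧ hl = 1 := by
  rw [add_mul, one_mul, add_mul, one_mul] at heq
  have key : r4 * h2 = 0 ∧ a * h1 = 0 ∧ b * h2 = 0 ∧ r1 * h1 = 0 ∧ hl = 1 := by
    generalize r4 * h2 = x1 at heq
    generalize a * h1 = x2 at heq
    generalize b * h2 = x3 at heq
    generalize r1 * h1 = x4 at heq
    omega
  obtain ⟨k1, k2, k3, k4, k5⟩ := key
  rcases Nat.mul_eq_zero.mp k1 with h | h
  rcases Nat.mul_eq_zero.mp k2 with h' | h'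
  rcases Nat.mul_eq_zero.mp k3 with h'' | h''
  rcases Nat.mul_eq_zero.mp k4 with h''' | h'''
  all_goals omega

/-- In the graded nilpotent setting, if all non-simple components `Y_{λ'}` with
`λ' < l₀` vanish and `{μ₁} + {μ₂} + Π = {l₀}` (i.e. `μ₁ + μ₂ + α` is a root for a simple
root `α` only when `α = li`, giving `l₀`), then the `g_{l₀}`-component of
`e^{ad(−Z₂)}e^{ad(−Z₁)}e^{ad Z₂}e^{ad Z₁}(Y)` equals `[[Z₂,Z₁], Y_{li}] + Y_{l₀}`. -/
theorem stmt_12 (V : Type*) [AddCommMonoid V]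
    (L : Type*) [LieRing L] [LieAlgebra ℝ L]
    (Λp : Finset V) (g : V → Submodule ℝ L)
    (hbr : ∀ a b : V, a ∈ Λp → b ∈ Λp → ∀ x ∈ g a, ∀ y ∈ g b,
      (a + b ∈ Λp → ⁅x, y⁆ ∈ g (a + b)) ∧ (a + b ∉ Λp → ⁅x, y⁆ = (0 : L)))
    (ht : V → ℕ) (htadd : ∀ a b : V, ht (a + b) = ht a + ht b)
    (htpos : ∀ l ∈ Λp, 1 ≤ ht l)
    (Yc : V → L) (hYc : ∀ l ∈ Λp, Yc l ∈ g l)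
    (μ₁ μ₂ : V) (hμ₁ : μ₁ ∈ Λp) (hμ₂ : μ₂ ∈ Λp)
    (Z₁ Z₂ : L) (hZ₁ : Z₁ ∈ g μ₁) (hZ₂ : Z₂ ∈ g μ₂)
    (m : ℕ)
    (hnil₁ : ∀ w : L, (fun w => ⁅Z₁, w⁆)^[m] w = 0)
    (hnil₂ : ∀ w : L, (fun w => ⁅Z₂, w⁆)^[m] w = 0)
    -- the ordering on the positive roots and the distinguished root `l₀`
    (lt : V → V → Prop) (l₀ : V) (hl₀ : l₀ ∈ Λp)
    -- all non-simple components below `l₀` vanish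
    (hzero : ∀ l' ∈ Λp, 2 ≤ ht l' → lt l' l₀ → Yc l' = 0)
    -- `{μ₁} + {μ₂} + Π = {l₀}`, witnessed by the simple root `li`
    (li : V) (hli : li ∈ Λp) (hlisimple : ht li = 1)
    (hsum : μ₁ + μ₂ + li = l₀)
    (huniq : ∀ α ∈ Λp, ht α = 1 → (μ₁ + μ₂ + α ∈ Λp ↔ α = li)) :
    let E : L → L → L := fun A W =>
      ∑ r ∈ Finset.range m, ((r.factorial : ℝ))⁻¹ • (fun w => ⁅A, w⁆)^[r] W
    let Y : L := ∑ l ∈ Λp, Yc l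
    let W : L := E (-Z₂) (E (-Z₁) (E Z₂ (E Z₁ Y)))
    ∃ C : V → L, (∀ l ∈ Λp, C l ∈ g l) ∧ W = ∑ l ∈ Λp, C l ∧
      C l₀ = ⁅⁅Z₂, Z₁⁆, Yc li⁆ + Yc l₀ := by
  classical
  intro E Y W
  have hEapp : ∀ (Zv y : L), E Zv y
      = ∑ r ∈ Finset.range m, ((r.factorial : ℝ))⁻¹ • (fun w => ⁅Zv, w⁆)^[r] y := fun _ _ => rfl
  have hYdef : Y = ∑ l ∈ Λp, Yc l := rfl
  have hWdef : W = E (-Z₂) (E (-Z₁) (E Z₂ (E Z₁ Y))) := rfl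
  -- trivial case `m = 0` : the Lie algebra is trivial
  rcases Nat.eq_zero_or_pos m with hm0 | hmpos
  · subst hm0
    have hall : ∀ x : L, x = 0 := fun x => hnil₁ x
    refine ⟨fun _ => 0, fun l _ => Submodule.zero_mem _, by simp [hall W], ?_⟩
    exact (hall _).symm
  -- case `m = 1` : `ad Z₁ = ad Z₂ = 0`, so `W = Y`
  rcases Nat.lt_or_ge m 2 with hm1 | hm2
  · have hm : m = 1 := by omega
    subst hm
    have hb₁ : ∀ w : L, ⁅Z₁, w⁆ = 0 := fun w => hnil₁ w
    have hb₂ : ∀ w : L, ⁅Z₂, w⁆ = 0 := fun w => hnil₂ w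
    have hE1 : ∀ (Zv y : L), E Zv y = y := by
      intro Zv y
      rw [hEapp]
      simp
    have hT : ⁅⁅Z₂, Z₁⁆, Yc li⁆ = 0 := by
      rw [lie_lie, hb₁ (Yc li), hb₂ (Yc li), lie_zero, lie_zero, sub_zero]
    refine ⟨Yc, hYc, ?_, ?_⟩
    · rw [hWdef, hE1, hE1, hE1, hE1, hYdef]
    · rw [hT, zero_add]
  -- main case `m ≥ 2`
  set A : Module.End ℝ L := LieAlgebra.ad ℝ L Z₁ with hAdef
  set B : Module.End ℝ L := LieAlgebra.ad ℝ L Z₂ with hBdef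
  have hfA : (fun w => ⁅Z₁, w⁆) = ⇑A := by funext w; simp [hAdef]
  have hfB : (fun w => ⁅Z₂, w⁆) = ⇑B := by funext w; simp [hBdef]
  have hfA' : (fun w => ⁅-Z₁, w⁆) = ⇑(-A) := by
    funext w; simp [hAdef, neg_lie]
  have hfB' : (fun w => ⁅-Z₂, w⁆) = ⇑(-B) := by
    funext w; simp [hBdef, neg_lie]
  have hAm : A ^ m = 0 := by
    ext w
    rw [Module.End.pow_apply, LinearMap.zero_apply, ← hfA]
    exact hnil₁ w
  have hBm : B ^ m = 0 := by
    ext w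
    rw [Module.End.pow_apply, LinearMap.zero_apply, ← hfB]
    exact hnil₂ w
  set P : Module.End ℝ L := ∑ r ∈ Finset.range m, ((r.factorial : ℝ))⁻¹ • A ^ r with hP
  set Q : Module.End ℝ L := ∑ r ∈ Finset.range m, ((r.factorial : ℝ))⁻¹ • B ^ r with hQ
  set P' : Module.End ℝ L := ∑ r ∈ Finset.range m, ((r.factorial : ℝ))⁻¹ • (-A) ^ r with hP'
  set Q' : Module.End ℝ L := ∑ r ∈ Finset.range m, ((r.factorial : ℝ))⁻¹ • (-B) ^ r with hQ'
  have happly : ∀ (T : Module.End ℝ L) (y : L),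
      (∑ r ∈ Finset.range m, ((r.factorial : ℝ))⁻¹ • T ^ r) y
        = ∑ r ∈ Finset.range m, ((r.factorial : ℝ))⁻¹ • (T ^ r) y := by
    intro T y
    rw [LinearMap.sum_apply]
    exact Finset.sum_congr rfl fun r _ => rfl
  have hEP : ∀ y, E Z₁ y = P y := by
    intro y
    rw [hEapp, hP, happly]
    refine Finset.sum_congr rfl fun r _ => ?_
    rw [Module.End.pow_apply, hfA]
  have hEQ : ∀ y, E Z₂ y = Q y := by
    intro y
    rw [hEapp, hQ, happly]
    refine Finset.sum_congr rfl fun r _ => ?_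
    rw [Module.End.pow_apply, hfB]
  have hEP' : ∀ y, E (-Z₁) y = P' y := by
    intro y
    rw [hEapp, hP', happly]
    refine Finset.sum_congr rfl fun r _ => ?_
    rw [Module.End.pow_apply, hfA']
  have hEQ' : ∀ y, E (-Z₂) y = Q' y := by
    intro y
    rw [hEapp, hQ', happly]
    refine Finset.sum_congr rfl fun r _ => ?_
    rw [Module.End.pow_apply, hfB']
  have hWop : W = Q' (P' (Q (P Y))) := by
    rw [hWdef, hEP, hEQ, hEP', hEQ']
  have h1 : P' * P = 1 := truncExpAux A m hmpos hAm
  have h2 : Q' * Q = 1 := truncExpAux B m hmpos hBm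
  set R : Module.End ℝ L := Q' * (P' * Q - Q * P') * P with hR
  have hop : Q' * P' * Q * P = R + 1 := by
    have haux : R = Q' * P' * Q * P - Q' * Q * (P' * P) := by
      rw [hR]; noncomm_ring
    rw [haux, h1, h2, mul_one, sub_add_cancel]
  have hWRY : W = R Y + Y := by
    have : (Q' * P' * Q * P) Y = Q' (P' (Q (P Y))) := by
      simp [Module.End.mul_apply]
    rw [hWop, ← this, hop, LinearMap.add_apply, Module.End.one_apply]
  -- expansion of the operators with general coefficients
  have happly2 : ∀ (T : Module.End ℝ L) (co : ℕ → ℝ) (y : L),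
      (∑ r ∈ Finset.range m, co r • T ^ r) y = ∑ r ∈ Finset.range m, co r • (T ^ r) y := by
    intro T co y
    rw [LinearMap.sum_apply]
    exact Finset.sum_congr rfl fun r _ => rfl
  have hnegpow : ∀ (T : Module.End ℝ L) (r : ℕ), (-T) ^ r = ((-1 : ℝ) ^ r) • T ^ r := by
    intro T r
    rw [← neg_one_smul ℝ T, smul_pow]
  have hP'alt : P' = ∑ r ∈ Finset.range m, ((-1 : ℝ) ^ r * ((r.factorial : ℝ))⁻¹) • A ^ r := by
    rw [hP']
    refine Finset.sum_congr rfl fun r _ => ?_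
    rw [hnegpow, smul_smul, mul_comm]
  have hQ'alt : Q' = ∑ r ∈ Finset.range m, ((-1 : ℝ) ^ r * ((r.factorial : ℝ))⁻¹) • B ^ r := by
    rw [hQ']
    refine Finset.sum_congr rfl fun r _ => ?_
    rw [hnegpow, smul_smul, mul_comm]
  have hPx : ∀ y, P y = ∑ r ∈ Finset.range m, ((r.factorial : ℝ))⁻¹ • (A ^ r) y := by
    intro y; rw [hP, happly2]
  have hQ'x : ∀ y, Q' y = ∑ r ∈ Finset.range m,
      ((-1 : ℝ) ^ r * ((r.factorial : ℝ))⁻¹) • (B ^ r) y := by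
    intro y; rw [hQ'alt, happly2]
  have e1 : ∀ y, P' (Q y) = ∑ r₃ ∈ Finset.range m, ∑ r₂ ∈ Finset.range m,
      (((-1 : ℝ) ^ r₃ * ((r₃.factorial : ℝ))⁻¹) * ((r₂.factorial : ℝ))⁻¹) •
        (A ^ r₃) ((B ^ r₂) y) := by
    intro y
    rw [hP'alt, happly2]
    refine Finset.sum_congr rfl fun r₃ _ => ?_
    rw [hQ, happly2, map_sum, Finset.smul_sum]
    refine Finset.sum_congr rfl fun r₂ _ => ?_
    rw [map_smul, smul_smul]
  have e2 : ∀ y, Q (P' y) = ∑ r₃ ∈ Finset.range m, ∑ r₂ ∈ Finset.range m,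
      (((-1 : ℝ) ^ r₃ * ((r₃.factorial : ℝ))⁻¹) * ((r₂.factorial : ℝ))⁻¹) •
        (B ^ r₂) ((A ^ r₃) y) := by
    intro y
    have e2' : Q (P' y) = ∑ r₂ ∈ Finset.range m, ∑ r₃ ∈ Finset.range m,
        (((-1 : ℝ) ^ r₃ * ((r₃.factorial : ℝ))⁻¹) * ((r₂.factorial : ℝ))⁻¹) •
          (B ^ r₂) ((A ^ r₃) y) := by
      rw [hQ, happly2]
      refine Finset.sum_congr rfl fun r₂ _ => ?_
      rw [hP'alt, happly2, map_sum, Finset.smul_sum]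
      refine Finset.sum_congr rfl fun r₃ _ => ?_
      rw [map_smul, smul_smul]
      congr 1
      ring
    rw [e2', Finset.sum_comm]
  have hMx : ∀ y, (P' * Q - Q * P') y = ∑ r₃ ∈ Finset.range m, ∑ r₂ ∈ Finset.range m,
      (((-1 : ℝ) ^ r₃ * ((r₃.factorial : ℝ))⁻¹) * ((r₂.factorial : ℝ))⁻¹) •
        ((A ^ r₃) ((B ^ r₂) y) - (B ^ r₂) ((A ^ r₃) y)) := by
    intro y
    rw [LinearMap.sub_apply, Module.End.mul_apply, Module.End.mul_apply, e1, e2,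
      ← Finset.sum_sub_distrib]
    refine Finset.sum_congr rfl fun r₃ _ => ?_
    rw [← Finset.sum_sub_distrib]
    refine Finset.sum_congr rfl fun r₂ _ => ?_
    rw [smul_sub]
  have hRx : ∀ x, R x = ∑ r₄ ∈ Finset.range m, ∑ r₁ ∈ Finset.range m,
      ∑ r₃ ∈ Finset.range m, ∑ r₂ ∈ Finset.range m,
      (((-1 : ℝ) ^ r₄ * ((r₄.factorial : ℝ))⁻¹) * (((r₁.factorial : ℝ))⁻¹ *
        (((-1 : ℝ) ^ r₃ * ((r₃.factorial : ℝ))⁻¹) * ((r₂.factorial : ℝ))⁻¹))) •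
      ((B ^ r₄) ((A ^ r₃) ((B ^ r₂) ((A ^ r₁) x)) - (B ^ r₂) ((A ^ r₃) ((A ^ r₁) x)))) := by
    intro x
    rw [hR, Module.End.mul_apply, Module.End.mul_apply, hPx, map_sum, hQ'x]
    refine Finset.sum_congr rfl fun r₄ _ => ?_
    rw [map_sum, Finset.smul_sum]
    refine Finset.sum_congr rfl fun r₁ _ => ?_
    rw [map_smul, hMx]
    simp only [map_sum, map_smul, Finset.smul_sum, smul_smul]
  -- the index set, the terms and their weights
  set S : Finset (V × (ℕ × ℕ × ℕ × ℕ)) :=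
    Λp ×ˢ (Finset.range m ×ˢ Finset.range m ×ˢ Finset.range m ×ˢ Finset.range m) with hS
  set f : V × (ℕ × ℕ × ℕ × ℕ) → L := fun i =>
    (((-1 : ℝ) ^ i.2.1 * ((i.2.1.factorial : ℝ))⁻¹) * (((i.2.2.1.factorial : ℝ))⁻¹ *
      (((-1 : ℝ) ^ i.2.2.2.1 * ((i.2.2.2.1.factorial : ℝ))⁻¹) * ((i.2.2.2.2.factorial : ℝ))⁻¹))) •
    ((B ^ i.2.1) ((A ^ i.2.2.2.1) ((B ^ i.2.2.2.2) ((A ^ i.2.2.1) (Yc i.1)))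
      - (B ^ i.2.2.2.2) ((A ^ i.2.2.2.1) ((A ^ i.2.2.1) (Yc i.1))))) with hf
  set wt : V × (ℕ × ℕ × ℕ × ℕ) → V := fun i =>
    i.2.1 • μ₂ + (i.2.2.2.1 • μ₁ + (i.2.2.2.2 • μ₂ + (i.2.2.1 • μ₁ + i.1))) with hwt
  have hRY : R Y = ∑ i ∈ S, f i := by
    have h0 : R Y = ∑ l ∈ Λp, R (Yc l) := by rw [hYdef, map_sum]
    rw [h0, hS, Finset.sum_product]
    refine Finset.sum_congr rfl fun l _ => ?_
    rw [hRx]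
    simp only [Finset.sum_product, hf]
  -- heights
  have ht0 : ht 0 = 0 := by
    have := htadd 0 0
    rw [add_zero] at this
    omega
  have htsmul : ∀ (n : ℕ) (v : V), ht (n • v) = n * ht v := by
    intro n v
    induction n with
    | zero => simp [ht0]
    | succ k ihk => rw [succ_nsmul, htadd, ihk]; ring
  -- the grading predicate is stable under iterated brackets
  have hKpow : ∀ (μ : V) (Z : L), μ ∈ Λp → Z ∈ g μ → ∀ (r : ℕ) (v : V) (x : L),
      ((v ∈ Λp → x ∈ g v) ∧ (v ∉ Λp → x = 0)) →
      (((r • μ + v) ∈ Λp → ((LieAlgebra.ad ℝ L Z) ^ r) x ∈ g (r • μ + v)) ∧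
        ((r • μ + v) ∉ Λp → ((LieAlgebra.ad ℝ L Z) ^ r) x = 0)) := by
    intro μ Z hμ hZ r
    induction r with
    | zero =>
      intro v x hx
      simpa [zero_nsmul] using hx
    | succ n ih =>
      intro v x hx
      have hx' := ih v x hx
      have hbrK : ((μ + (n • μ + v) ∈ Λp → ⁅Z, ((LieAlgebra.ad ℝ L Z) ^ n) x⁆ ∈ g (μ + (n • μ + v))) ∧
          (μ + (n • μ + v) ∉ Λp → ⁅Z, ((LieAlgebra.ad ℝ L Z) ^ n) x⁆ = 0)) := by
        by_cases hv : (n • μ + v) ∈ Λp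
        · exact hbr μ _ hμ hv Z hZ _ (hx'.1 hv)
        · rw [hx'.2 hv]
          exact ⟨fun _ => by simp, fun _ => lie_zero Z⟩
      have heq : (n + 1) • μ + v = μ + (n • μ + v) := by
        rw [succ_nsmul, add_comm (n • μ) μ, add_assoc]
      rw [heq, pow_succ']
      constructor
      · intro h
        have := hbrK.1 h
        rw [Module.End.mul_apply]
        simpa [LieAlgebra.ad_apply] using this
      · intro h
        have := hbrK.2 h
        rw [Module.End.mul_apply]
        simpa [LieAlgebra.ad_apply] using this
  -- every term of the expansion is graded with weight `wt`
  have hKf : ∀ i ∈ S, ((wt i ∈ Λp → f i ∈ g (wt i)) ∧ (wt i ∉ Λp → f i = 0)) := by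
    rintro ⟨l, r₄, r₁, r₃, r₂⟩ hi
    rw [hS, Finset.mem_product] at hi
    have hl : l ∈ Λp := hi.1
    have k0 : (l ∈ Λp → Yc l ∈ g l) ∧ (l ∉ Λp → Yc l = 0) :=
      ⟨fun h => hYc l h, fun h => absurd hl h⟩
    have k1 := hKpow μ₁ Z₁ hμ₁ hZ₁ r₁ l (Yc l) k0
    have k2 := hKpow μ₂ Z₂ hμ₂ hZ₂ r₂ _ _ k1
    have k3 := hKpow μ₁ Z₁ hμ₁ hZ₁ r₃ _ _ k2
    have k3' := hKpow μ₁ Z₁ hμ₁ hZ₁ r₃ _ _ k1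
    have k4' := hKpow μ₂ Z₂ hμ₂ hZ₂ r₂ _ _ k3'
    have hveq : r₂ • μ₂ + (r₃ • μ₁ + (r₁ • μ₁ + l)) = r₃ • μ₁ + (r₂ • μ₂ + (r₁ • μ₁ + l)) := by
      rw [add_left_comm]
    rw [hveq] at k4'
    have k5 : ((r₃ • μ₁ + (r₂ • μ₂ + (r₁ • μ₁ + l)) ∈ Λp →
          ((A ^ r₃) ((B ^ r₂) ((A ^ r₁) (Yc l))) - (B ^ r₂) ((A ^ r₃) ((A ^ r₁) (Yc l))))
            ∈ g (r₃ • μ₁ + (r₂ • μ₂ + (r₁ • μ₁ + l)))) ∧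
        (r₃ • μ₁ + (r₂ • μ₂ + (r₁ • μ₁ + l)) ∉ Λp →
          ((A ^ r₃) ((B ^ r₂) ((A ^ r₁) (Yc l))) - (B ^ r₂) ((A ^ r₃) ((A ^ r₁) (Yc l)))) = 0)) :=
      ⟨fun h => sub_mem (k3.1 h) (k4'.1 h), fun h => by rw [k3.2 h, k4'.2 h, sub_zero]⟩
    have k6 := hKpow μ₂ Z₂ hμ₂ hZ₂ r₄ _ _ k5
    constructor
    · intro h
      rw [hf]
      exact Submodule.smul_mem _ _ (k6.1 h)
    · intro h
      rw [hf]
      have := k6.2 h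
      simp only at this ⊢
      rw [this, smul_zero]
  -- the bucketed components
  set D : V → L := fun v => ∑ i ∈ S.filter (fun i => wt i = v), f i with hD
  have hDmem : ∀ l ∈ Λp, D l ∈ g l := by
    intro l hl
    rw [hD]
    refine Submodule.sum_mem _ fun i hi => ?_
    rw [Finset.mem_filter] at hi
    have := (hKf i hi.1).1 (by rw [hi.2]; exact hl)
    rwa [hi.2] at this
  have hDsum : ∑ l ∈ Λp, D l = R Y := by
    have hst : ∀ l ∈ Λp, S.filter (fun i => wt i = l)
        = (S.filter (fun i => wt i ∈ Λp)).filter (fun i => wt i = l) := by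
      intro l hl
      rw [Finset.filter_filter]
      ext i
      simp only [Finset.mem_filter]
      constructor
      · rintro ⟨h1, h2⟩
        exact ⟨h1, by rw [h2]; exact hl, h2⟩
      · rintro ⟨h1, h2, h3⟩
        exact ⟨h1, h3⟩
    have step1 : ∑ l ∈ Λp, D l
        = ∑ l ∈ Λp, ∑ i ∈ (S.filter (fun i => wt i ∈ Λp)).filter (fun i => wt i = l), f i := by
      refine Finset.sum_congr rfl fun l hl => ?_
      simp only [hD]
      rw [hst l hl]
    have step2 : ∑ l ∈ Λp, ∑ i ∈ (S.filter (fun i => wt i ∈ Λp)).filter (fun i => wt i = l), f i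
        = ∑ i ∈ S.filter (fun i => wt i ∈ Λp), f i :=
      Finset.sum_fiberwise_of_maps_to (fun i hi => (Finset.mem_filter.mp hi).2) f
    have step3 : ∑ i ∈ S.filter (fun i => wt i ∈ Λp), f i = ∑ i ∈ S, f i := by
      refine Finset.sum_filter_of_ne fun i hi hne => ?_
      by_contra hw
      exact hne ((hKf i hi).2 hw)
    rw [step1, step2, step3, hRY]
  -- identifying the `l₀`-bucket
  have hhtl₀ : ht l₀ = ht μ₁ + ht μ₂ + 1 := by
    rw [← hsum, htadd, htadd, hlisimple]
  set i₀ : V × (ℕ × ℕ × ℕ × ℕ) := (li, (0, 0, 1, 1)) with hi₀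
  have hwti₀ : wt i₀ = l₀ := by
    rw [hwt, hi₀]
    simp only [zero_nsmul, one_nsmul, zero_add]
    rw [← add_assoc]
    exact hsum
  have hterm : ∀ i ∈ S.filter (fun i => wt i = l₀),
      f i = if i = i₀ then ⁅⁅Z₂, Z₁⁆, Yc li⁆ else 0 := by
    rintro ⟨l, r₄, r₁, r₃, r₂⟩ hi
    rw [Finset.mem_filter] at hi
    obtain ⟨hiS, hwl⟩ := hi
    rw [hS, Finset.mem_product] at hiS
    have hl : l ∈ Λp := hiS.1
    by_cases h3 : r₃ = 0
    · subst h3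
      rw [if_neg (by rw [hi₀]; simp)]
      rw [hf]
      simp
    by_cases h2 : r₂ = 0
    · subst h2
      rw [if_neg (by rw [hi₀]; simp)]
      rw [hf]
      simp
    -- now `r₃ ≥ 1` and `r₂ ≥ 1`; heights force everything
    have hhts : ht (wt (l, r₄, r₁, r₃, r₂)) =
        r₄ * ht μ₂ + (r₃ * ht μ₁ + (r₂ * ht μ₂ + (r₁ * ht μ₁ + ht l))) := by
      rw [hwt]
      simp only [htadd, htsmul]
    obtain ⟨a, ha⟩ := Nat.exists_eq_add_of_le (Nat.one_le_iff_ne_zero.mpr h3)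
    obtain ⟨b, hb⟩ := Nat.exists_eq_add_of_le (Nat.one_le_iff_ne_zero.mpr h2)
    have heq : r₄ * ht μ₂ + ((1 + a) * ht μ₁ + ((1 + b) * ht μ₂ + (r₁ * ht μ₁ + ht l)))
        = ht μ₁ + ht μ₂ + 1 := by
      rw [← ha, ← hb, ← hhts, hwl, hhtl₀]
    obtain ⟨e4, ea, eb, e1', el⟩ := arithAux r₄ r₁ a b (ht μ₁) (ht μ₂) (ht l)
      (htpos μ₁ hμ₁) (htpos μ₂ hμ₂) (htpos l hl) heq
    have hr₃ : r₃ = 1 := by omega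
    have hr₂ : r₂ = 1 := by omega
    subst e4; subst e1'; subst hr₃; subst hr₂
    -- weight equation now reads `μ₁ + (μ₂ + l) = l₀`
    have hwl' : μ₁ + μ₂ + l = l₀ := by
      rw [hwt] at hwl
      simp only [zero_nsmul, one_nsmul, zero_add] at hwl
      rw [add_assoc]
      exact hwl
    have hlα : l = li := (huniq l hl el).mp (by rw [hwl']; exact hl₀)
    subst hlα
    rw [if_pos (by rw [hi₀])]
    rw [hf]
    simp only [pow_zero, pow_one, one_smul, Nat.factorial_zero, Nat.factorial_one,
      Nat.cast_one, inv_one, mul_one, one_mul, Module.End.one_apply]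
    rw [lie_lie]
    simp only [neg_smul, one_smul, neg_sub, hAdef, hBdef, LieAlgebra.ad_apply]
  have hmem : i₀ ∈ S.filter (fun i => wt i = l₀) := by
    refine Finset.mem_filter.mpr ⟨?_, hwti₀⟩
    rw [hS, hi₀]
    simp only [Finset.mem_product, Finset.mem_range]
    exact ⟨hli, by omega, by omega, by omega, by omega⟩
  have hDl₀ : D l₀ = ⁅⁅Z₂, Z₁⁆, Yc li⁆ := by
    simp only [hD]
    rw [Finset.sum_congr rfl hterm,
      Finset.sum_ite_eq' (S.filter (fun i => wt i = l₀)) i₀ (fun _ => ⁅⁅Z₂, Z₁⁆, Yc li⁆),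
      if_pos hmem]
  refine ⟨fun v => Yc v + D v, ?_, ?_, ?_⟩
  · intro l hl
    exact Submodule.add_mem _ (hYc l hl) (hDmem l hl)
  · rw [hWRY, Finset.sum_add_distrib, ← hYdef, hDsum, add_comm]
  · show Yc l₀ + D l₀ = ⁅⁅Z₂, Z₁⁆, Yc li⁆ + Yc l₀
    rw [hDl₀, add_comm]
end
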